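/- arXiv:1601.06003 — 4 statements merged into one kernel-verified Lean document; each statement's English description precedes it below -/
import Mathlib

section
/- There exists a constant C > 0 such that for every integer k ≥ 1 and every u ∈ ℝ, ‖Z_k(u)‖² = Σ_{i=0}^{k−1} ℋ_i(u)² ≤ C k; in particular sup_{u ∈ ℝ} ‖Z_k(u)‖ ≤ C' √k for a constant C' > 0. -/
open MeasureTheory Real Filter

/-- Physicists' Hermite polynomials: `H 0 = 1`, `H 1 = 2x`,
`H (i+1) = 2x * H i - 2i * H (i-1)`. -/
noncomputable def physHermite : ℕ → ℝ → ℝ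
  | 0 => fun _ => 1
  | 1 => fun x => 2 * x
  | n + 2 => fun x => 2 * x * physHermite (n + 1) x - 2 * (n + 1) * physHermite n x

lemma physHermite_zero (x : ℝ) : physHermite 0 x = 1 := rfl
lemma physHermite_one (x : ℝ) : physHermite 1 x = 2 * x := rfl
lemma physHermite_succ_succ (n : ℕ) (x : ℝ) :
    physHermite (n + 2) x = 2 * x * physHermite (n + 1) x - 2 * (n + 1) * physHermite n x := rfl

/-- `physHermite n` is a polynomial function. -/
lemma physHermite_isPoly (n : ℕ) : ∃ p : Polynomial ℝ, ∀ x, physHermite n x = p.eval x := by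
  induction n using Nat.strong_induction_on with
  | _ n ih =>
    match n with
    | 0 => exact ⟨1, fun x => by simp [physHermite_zero]⟩
    | 1 => exact ⟨Polynomial.C 2 * Polynomial.X, fun x => by simp [physHermite_one]⟩
    | n + 2 =>
      obtain ⟨p, hp⟩ := ih (n + 1) (by omega)
      obtain ⟨q, hq⟩ := ih n (by omega)
      refine ⟨Polynomial.C 2 * Polynomial.X * p - Polynomial.C (2 * ((n : ℝ) + 1)) * q,
        fun x => ?_⟩
      rw [physHermite_succ_succ, hp, hq]
      simp only [Polynomial.eval_sub, Polynomial.eval_mul, Polynomial.eval_C, Polynomial.eval_X]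
lemma hasDerivAt_physHermite (n : ℕ) (x : ℝ) :
    HasDerivAt (physHermite n) (2 * n * physHermite (n - 1) x) x := by
  induction n using Nat.strong_induction_on with
  | _ n ih =>
    match n with
    | 0 => rw [show physHermite 0 = fun _ => (1:ℝ) from funext physHermite_zero]; simpa using (hasDerivAt_const x (1:ℝ))
    | 1 =>
      have : HasDerivAt (physHermite 1) 2 x := by
        rw [show physHermite 1 = fun y => 2 * y from funext physHermite_one]; simpa using ((hasDerivAt_id x).const_mul (2:ℝ))
      simpa [physHermite_zero] using this
    | n + 2 =>
      have h1 := ih (n + 1) (by omega)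
      have h0 := ih n (by omega)
      simp only [Nat.add_sub_cancel, Nat.cast_add, Nat.cast_one] at h1
      have h2 : HasDerivAt (fun y : ℝ => 2 * ((n : ℝ) + 1) * physHermite n y)
          (2 * ((n : ℝ) + 1) * (2 * n * physHermite (n - 1) x)) x := h0.const_mul _
      have hsub := (((hasDerivAt_id x).const_mul (2:ℝ)).mul h1).sub h2
      have key : physHermite (n+2)
          = fun y => 2 * id y * physHermite (n+1) y - 2 * ((n:ℝ)+1) * physHermite n y :=
        funext fun y => by rw [physHermite_succ_succ]; simp
      rw [key]
      refine hsub.congr_deriv ?_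
      simp only [id_eq, Nat.add_sub_cancel]
      rcases n with _ | m
      · simp [physHermite_one, physHermite_zero]; ring
      · simp only [show m + 1 + 2 - 1 = m + 2 from rfl, show m + 1 + 1 = m + 2 from rfl]
        rw [physHermite_succ_succ m x]
        push_cast
        ring

/-- polynomial-like functions -/
def IsPolyFun (f : ℝ → ℝ) : Prop := ∃ p : Polynomial ℝ, ∀ x, f x = p.eval x

lemma IsPolyFun.mul {f g : ℝ → ℝ} (hf : IsPolyFun f) (hg : IsPolyFun g) :
    IsPolyFun (fun x => f x * g x) := by
  obtain ⟨p, hp⟩ := hf; obtain ⟨q, hq⟩ := hg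
  exact ⟨p * q, fun x => by simp [hp, hq]⟩

lemma IsPolyFun.add {f g : ℝ → ℝ} (hf : IsPolyFun f) (hg : IsPolyFun g) :
    IsPolyFun (fun x => f x + g x) := by
  obtain ⟨p, hp⟩ := hf; obtain ⟨q, hq⟩ := hg
  exact ⟨p + q, fun x => by simp [hp, hq]⟩

lemma IsPolyFun.const_mul {f : ℝ → ℝ} (hf : IsPolyFun f) (c : ℝ) :
    IsPolyFun (fun x => c * f x) := by
  obtain ⟨p, hp⟩ := hf
  exact ⟨Polynomial.C c * p, fun x => by simp [hp]⟩

lemma IsPolyFun.X_mul {f : ℝ → ℝ} (hf : IsPolyFun f) :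
    IsPolyFun (fun x => x * f x) := by
  obtain ⟨p, hp⟩ := hf
  exact ⟨Polynomial.X * p, fun x => by simp [hp]⟩

lemma IsPolyFun.continuous {f : ℝ → ℝ} (hf : IsPolyFun f) : Continuous f := by
  obtain ⟨p, hp⟩ := hf
  have : f = fun x => p.eval x := funext hp
  rw [this]; exact p.continuous_aeval

lemma integrable_pow_mul_gaussian (n : ℕ) :
    Integrable (fun x : ℝ => x ^ n * Real.exp (-x ^ 2)) := by
  have h := integrable_rpow_mul_exp_neg_mul_sq (b := 1) one_pos
    (s := (n : ℝ)) (lt_of_lt_of_le neg_one_lt_zero (Nat.cast_nonneg n))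
  simpa [Real.rpow_natCast] using h

lemma IsPolyFun.integrable_gaussian {f : ℝ → ℝ} (hf : IsPolyFun f) :
    Integrable (fun x : ℝ => f x * Real.exp (-x ^ 2)) := by
  obtain ⟨p, hp⟩ := hf
  have : (fun x : ℝ => f x * Real.exp (-x ^ 2))
      = fun x => p.eval x * Real.exp (-x ^ 2) := funext fun x => by rw [hp]
  rw [this]
  clear hp this
  induction p using Polynomial.induction_on' with
  | monomial n c =>
    simpa [Polynomial.eval_monomial, mul_assoc] using (integrable_pow_mul_gaussian n).const_mul c
  | add p q hp hq =>
    simpa [add_mul, Pi.add_def] using hp.add hq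

lemma IsPolyFun.tendsto_gaussian_atTop {f : ℝ → ℝ} (hf : IsPolyFun f) :
    Tendsto (fun x : ℝ => f x * Real.exp (-x ^ 2)) atTop (nhds 0) := by
  obtain ⟨p, hp⟩ := hf
  have h0 : Tendsto (fun x : ℝ => |p.eval x / Real.exp x|) atTop (nhds 0) := by
    simpa using (Polynomial.tendsto_div_exp_atTop p).abs
  apply squeeze_zero_norm' _ h0
  filter_upwards [eventually_ge_atTop (1 : ℝ)] with x hx
  rw [hp, abs_div, abs_of_pos (Real.exp_pos x)]
  rw [Real.norm_eq_abs, abs_mul, abs_of_pos (Real.exp_pos _)]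
  have h1 : Real.exp (-x ^ 2) ≤ Real.exp (-x) := by
    apply Real.exp_le_exp.mpr; nlinarith
  calc |p.eval x| * Real.exp (-x ^ 2) ≤ |p.eval x| * Real.exp (-x) := by
        exact mul_le_mul_of_nonneg_left h1 (abs_nonneg _)
    _ = |p.eval x| / Real.exp x := by rw [Real.exp_neg]; ring

lemma IsPolyFun.tendsto_gaussian_atBot {f : ℝ → ℝ} (hf : IsPolyFun f) :
    Tendsto (fun x : ℝ => f x * Real.exp (-x ^ 2)) atBot (nhds 0) := by
  obtain ⟨p, hp⟩ := hf
  have hq : IsPolyFun (fun x : ℝ => p.eval (-x)) :=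
    ⟨p.comp (-Polynomial.X), fun x => by simp⟩
  have h := hq.tendsto_gaussian_atTop.comp tendsto_neg_atBot_atTop
  have : ((fun x : ℝ => p.eval (-x) * Real.exp (-x ^ 2)) ∘ (fun x : ℝ => -x))
      = fun x : ℝ => f x * Real.exp (-x ^ 2) := by
    funext x; simp [Function.comp, hp, neg_sq]
  rwa [this] at h

/-- Integration by parts for polynomial-like functions against the Gaussian. -/
lemma ibp_gaussian {f f' : ℝ → ℝ} (hf : IsPolyFun f) (hf' : IsPolyFun f')
    (hd : ∀ x, HasDerivAt f (f' x) x) :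
    ∫ x : ℝ, x * f x * Real.exp (-x ^ 2)
      = (1 / 2) * ∫ x : ℝ, f' x * Real.exp (-x ^ 2) := by
  set g : ℝ → ℝ := fun x => f x * Real.exp (-x ^ 2) with hg
  set g' : ℝ → ℝ := fun x => f' x * Real.exp (-x ^ 2) - 2 * (x * f x * Real.exp (-x ^ 2))
    with hg'
  have hgd : ∀ x, HasDerivAt g (g' x) x := by
    intro x
    have he : HasDerivAt (fun y : ℝ => Real.exp (-y ^ 2)) (Real.exp (-x ^ 2) * (-(2 * x))) x := by
      have hin : HasDerivAt (fun y : ℝ => -y ^ 2) (-(2 * x)) x := by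
        simpa [Pi.neg_def] using ((hasDerivAt_pow 2 x)).neg
      exact hin.exp
    have := (hd x).mul he
    refine this.congr_deriv ?_
    simp [hg']; ring
  have hint' : Integrable g' := by
    have h1 : Integrable (fun x => f' x * Real.exp (-x ^ 2)) := hf'.integrable_gaussian
    have h2 : Integrable (fun x => x * f x * Real.exp (-x ^ 2)) := by
      simpa [mul_assoc] using hf.X_mul.integrable_gaussian
    exact h1.sub (h2.const_mul 2)
  have htop : Tendsto g atTop (nhds 0) := hf.tendsto_gaussian_atTop
  have hbot : Tendsto g atBot (nhds 0) := hf.tendsto_gaussian_atBot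
  have hIic : ∫ x in Set.Iic (0:ℝ), g' x = g 0 - 0 :=
    integral_Iic_of_hasDerivAt_of_tendsto' (fun x _ => hgd x) hint'.integrableOn hbot
  have hIoi : ∫ x in Set.Ioi (0:ℝ), g' x = 0 - g 0 :=
    integral_Ioi_of_hasDerivAt_of_tendsto' (fun x _ => hgd x) hint'.integrableOn htop
  have hzero : ∫ x : ℝ, g' x = 0 := by
    rw [← intervalIntegral.integral_Iic_add_Ioi hint'.integrableOn hint'.integrableOn, hIic, hIoi]; ring
  have h1 : Integrable (fun x => f' x * Real.exp (-x ^ 2)) := hf'.integrable_gaussian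
  have h2 : Integrable (fun x => x * f x * Real.exp (-x ^ 2)) := by
    simpa [mul_assoc] using hf.X_mul.integrable_gaussian
  rw [hg', ] at hzero
  rw [integral_sub h1 (h2.const_mul 2), integral_const_mul] at hzero
  linarith

lemma isPolyFun_physHermite (n : ℕ) : IsPolyFun (physHermite n) := physHermite_isPoly n
lemma physHermite_succ (n : ℕ) (x : ℝ) :
    physHermite (n + 1) x = 2 * x * physHermite n x - 2 * n * physHermite (n - 1) x := by
  cases n with
  | zero => simp [physHermite_one, physHermite_zero]
  | succ m =>
    rw [physHermite_succ_succ]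
    push_cast
    ring_nf

noncomputable def Jint (m n : ℕ) : ℝ :=
  ∫ x : ℝ, physHermite m x * physHermite n x * Real.exp (-x ^ 2)

lemma Jint_comm (m n : ℕ) : Jint m n = Jint n m := by
  unfold Jint
  congr 1; funext x; ring

lemma Jint_rec (m n : ℕ) : Jint m (n + 1) = 2 * m * Jint (m - 1) n := by
  classical
  have hm := isPolyFun_physHermite m
  have hn := isPolyFun_physHermite n
  have hF : IsPolyFun (fun x => physHermite m x * physHermite n x) := hm.mul hn
  have hG : IsPolyFun (fun x => physHermite m x * physHermite (n - 1) x) :=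
    hm.mul (isPolyFun_physHermite (n - 1))
  have hF' : IsPolyFun (fun x =>
      2 * m * physHermite (m - 1) x * physHermite n x
        + physHermite m x * (2 * n * physHermite (n - 1) x)) := by
    have h1 : IsPolyFun (fun x => 2 * (m:ℝ) * physHermite (m-1) x * physHermite n x) := by
      have := ((isPolyFun_physHermite (m-1)).mul hn).const_mul (2 * (m:ℝ))
      simpa [mul_assoc] using this
    have h2 : IsPolyFun (fun x => physHermite m x * (2 * (n:ℝ) * physHermite (n-1) x)) :=
      hm.mul ((isPolyFun_physHermite (n-1)).const_mul (2 * (n:ℝ)))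
    exact h1.add h2
  have hd : ∀ x, HasDerivAt (fun x => physHermite m x * physHermite n x)
      (2 * m * physHermite (m - 1) x * physHermite n x
        + physHermite m x * (2 * n * physHermite (n - 1) x)) x := fun x =>
    (hasDerivAt_physHermite m x).mul (hasDerivAt_physHermite n x)
  have hibp := ibp_gaussian hF hF' hd
  -- expand J m (n+1)
  have hsplit : (fun x => physHermite m x * physHermite (n+1) x * Real.exp (-x ^ 2))
      = fun x => 2 * (x * (physHermite m x * physHermite n x) * Real.exp (-x ^ 2))
        - 2 * n * (physHermite m x * physHermite (n-1) x * Real.exp (-x ^ 2)) := by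
    funext x
    rw [physHermite_succ n x]
    ring
  have hintX : Integrable (fun x : ℝ =>
      x * (physHermite m x * physHermite n x) * Real.exp (-x ^ 2)) :=
    hF.X_mul.integrable_gaussian
  have hintG : Integrable (fun x : ℝ =>
      physHermite m x * physHermite (n-1) x * Real.exp (-x ^ 2)) :=
    hG.integrable_gaussian
  have hJ : Jint m (n+1)
      = 2 * (∫ x : ℝ, x * (physHermite m x * physHermite n x) * Real.exp (-x ^ 2)) -
        2 * n * Jint m (n-1) := by
    unfold Jint
    rw [hsplit, integral_sub (hintX.const_mul 2) (hintG.const_mul (2*n)),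
      integral_const_mul, integral_const_mul]
  -- expand the f' integral
  have hsum : (fun x => (2 * (m:ℝ) * physHermite (m - 1) x * physHermite n x
        + physHermite m x * (2 * n * physHermite (n - 1) x)) * Real.exp (-x ^ 2))
      = fun x => 2 * m * (physHermite (m-1) x * physHermite n x * Real.exp (-x ^ 2))
        + 2 * n * (physHermite m x * physHermite (n-1) x * Real.exp (-x ^ 2)) := by
    funext x; ring
  have hint1 : Integrable (fun x : ℝ =>
      physHermite (m-1) x * physHermite n x * Real.exp (-x ^ 2)) :=
    ((isPolyFun_physHermite (m-1)).mul hn).integrable_gaussian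
  have hf'int : (∫ x : ℝ, (2 * (m:ℝ) * physHermite (m - 1) x * physHermite n x
        + physHermite m x * (2 * n * physHermite (n - 1) x)) * Real.exp (-x ^ 2))
      = 2 * m * Jint (m-1) n + 2 * n * Jint m (n-1) := by
    rw [hsum, integral_add (hint1.const_mul (2*m)) (hintG.const_mul (2*n)),
      integral_const_mul, integral_const_mul]
    rfl
  rw [hJ, hibp, hf'int]
  ring

/-- Hermite functions `ℋ_i(x) = (√π 2^i i!)^{-1/2} H_i(x) e^{-x²/2}`. -/
noncomputable def hermiteFun (i : ℕ) (x : ℝ) : ℝ :=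
  (Real.sqrt (Real.sqrt Real.pi * 2 ^ i * Nat.factorial i))⁻¹ * physHermite i x *
    Real.exp (-x ^ 2 / 2)

lemma Jint_diag (n : ℕ) : Jint n n = Real.sqrt Real.pi * 2 ^ n * n.factorial := by
  induction n with
  | zero =>
    unfold Jint
    simp only [physHermite_zero, one_mul, Nat.factorial_zero, Nat.cast_one, pow_zero, mul_one]
    simpa using integral_gaussian 1
  | succ n ih =>
    have h := Jint_rec (n+1) n
    simp only [Nat.add_sub_cancel] at h
    rw [h, ih, Nat.factorial_succ]
    push_cast
    ring

lemma normConst_pos (i : ℕ) : (0:ℝ) < Real.sqrt Real.pi * 2 ^ i * Nat.factorial i := by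
  have h : (0:ℝ) < Real.sqrt Real.pi := Real.sqrt_pos.mpr Real.pi_pos
  positivity

lemma hermiteFun_sq (i : ℕ) (x : ℝ) :
    hermiteFun i x ^ 2 = (Real.sqrt Real.pi * 2 ^ i * Nat.factorial i)⁻¹ *
      (physHermite i x * physHermite i x * Real.exp (-x ^ 2)) := by
  unfold hermiteFun
  have hA := (normConst_pos i).le
  have h1 : Real.sqrt (Real.sqrt Real.pi * 2 ^ i * Nat.factorial i) ^ 2
      = Real.sqrt Real.pi * 2 ^ i * Nat.factorial i := Real.sq_sqrt hA
  have h2 : Real.exp (-x ^ 2 / 2) * Real.exp (-x ^ 2 / 2) = Real.exp (-x ^ 2) := by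
    rw [← Real.exp_add]; ring_nf
  rw [mul_pow, mul_pow, ← h2]
  rw [inv_pow, h1]
  ring

lemma integral_hermiteFun_sq (i : ℕ) : ∫ x : ℝ, hermiteFun i x ^ 2 = 1 := by
  have : (fun x : ℝ => hermiteFun i x ^ 2)
      = fun x => (Real.sqrt Real.pi * 2 ^ i * Nat.factorial i)⁻¹ *
        (physHermite i x * physHermite i x * Real.exp (-x ^ 2)) := funext (hermiteFun_sq i)
  rw [this, integral_const_mul]
  have : (∫ x : ℝ, physHermite i x * physHermite i x * Real.exp (-x ^ 2)) = Jint i i := rfl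
  rw [this, Jint_diag]
  exact inv_mul_cancel₀ (normConst_pos i).ne'

lemma integrable_hermiteFun_sq (i : ℕ) : Integrable (fun x : ℝ => hermiteFun i x ^ 2) := by
  have : (fun x : ℝ => hermiteFun i x ^ 2)
      = fun x => (Real.sqrt Real.pi * 2 ^ i * Nat.factorial i)⁻¹ *
        ((physHermite i x * physHermite i x) * Real.exp (-x ^ 2)) := by
    funext x; rw [hermiteFun_sq]
  rw [this]
  exact (((isPolyFun_physHermite i).mul (isPolyFun_physHermite i)).integrable_gaussian).const_mul _

lemma integrable_hermiteFun_mul (i j : ℕ) :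
    Integrable (fun x : ℝ => hermiteFun i x * hermiteFun j x) := by
  have : (fun x : ℝ => hermiteFun i x * hermiteFun j x)
      = fun x => ((Real.sqrt (Real.sqrt Real.pi * 2 ^ i * Nat.factorial i))⁻¹ *
          (Real.sqrt (Real.sqrt Real.pi * 2 ^ j * Nat.factorial j))⁻¹) *
        ((physHermite i x * physHermite j x) * Real.exp (-x ^ 2)) := by
    funext x
    unfold hermiteFun
    rw [show Real.exp (-x^2) = Real.exp (-x ^ 2 / 2) * Real.exp (-x ^ 2 / 2) by
      rw [← Real.exp_add]; ring_nf]
    ring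
  rw [this]
  exact (((isPolyFun_physHermite i).mul (isPolyFun_physHermite j)).integrable_gaussian).const_mul _

lemma sqrt_normConst_succ (i : ℕ) :
    Real.sqrt (Real.sqrt Real.pi * 2 ^ (i+1) * (Nat.factorial (i+1)))
      = Real.sqrt (2*((i:ℝ)+1)) * Real.sqrt (Real.sqrt Real.pi * 2 ^ i * (Nat.factorial i)) := by
  rw [← Real.sqrt_mul (by positivity)]
  congr 1
  rw [Nat.factorial_succ]; push_cast; ring

lemma e1 (i : ℕ) :
    Real.sqrt (2*((i:ℝ)+1)) * (Real.sqrt (Real.sqrt Real.pi * 2 ^ (i+1) * (Nat.factorial (i+1))))⁻¹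
      = (Real.sqrt (Real.sqrt Real.pi * 2 ^ i * (Nat.factorial i)))⁻¹ := by
  rw [sqrt_normConst_succ, mul_inv, ← mul_assoc,
    mul_inv_cancel₀ (by positivity : Real.sqrt (2*((i:ℝ)+1)) ≠ 0), one_mul]

lemma e2 (i : ℕ) :
    Real.sqrt (2*(i:ℝ)) * (Real.sqrt (Real.sqrt Real.pi * 2 ^ (i-1) * (Nat.factorial (i-1))))⁻¹
      = 2*(i:ℝ) * (Real.sqrt (Real.sqrt Real.pi * 2 ^ i * (Nat.factorial i)))⁻¹ := by
  cases i with
  | zero => simp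
  | succ j =>
    have hs : Real.sqrt (2*((j:ℝ)+1)) * Real.sqrt (2*((j:ℝ)+1)) = 2*((j:ℝ)+1) :=
      Real.mul_self_sqrt (by positivity)
    have hsne : Real.sqrt (2*((j:ℝ)+1)) ≠ 0 := by
      refine ne_of_gt (Real.sqrt_pos.mpr (by positivity))
    have hane : Real.sqrt (Real.sqrt Real.pi * 2 ^ j * (Nat.factorial j)) ≠ 0 :=
      ne_of_gt (Real.sqrt_pos.mpr (normConst_pos j))
    rw [Nat.add_sub_cancel, sqrt_normConst_succ j, mul_inv]
    have hcast : (((j+1:ℕ)):ℝ) = (j:ℝ)+1 := by push_cast; ring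
    rw [hcast]
    have key : (2*((j:ℝ)+1)) * (Real.sqrt (2*((j:ℝ)+1)))⁻¹ = Real.sqrt (2*((j:ℝ)+1)) := by
      rw [mul_inv_eq_iff_eq_mul₀ hsne]; exact hs.symm
    rw [← mul_assoc, key]

lemma hermiteFun_succ (i : ℕ) (x : ℝ) :
    Real.sqrt (2*((i:ℝ)+1)) * hermiteFun (i+1) x
      = 2 * x * hermiteFun i x - Real.sqrt (2*(i:ℝ)) * hermiteFun (i-1) x := by
  unfold hermiteFun
  rw [physHermite_succ i x]
  linear_combination ((2 * x * physHermite i x - 2 * (i:ℝ) * physHermite (i-1) x)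
      * Real.exp (-x^2/2)) * e1 i
    + (physHermite (i-1) x * Real.exp (-x^2/2)) * e2 i

lemma hermiteFun_hasDerivAt (i : ℕ) (x : ℝ) :
    HasDerivAt (hermiteFun i)
      (Real.sqrt (2*(i:ℝ)) * hermiteFun (i-1) x - x * hermiteFun i x) x := by
  have he : HasDerivAt (fun y : ℝ => Real.exp (-y ^ 2 / 2)) (Real.exp (-x ^ 2 / 2) * (-x)) x := by
    have hin : HasDerivAt (fun y : ℝ => -y ^ 2 / 2) (-x) x := by
      have := ((hasDerivAt_pow 2 x)).neg.div_const 2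
      refine this.congr_deriv ?_
      simp; ring
    exact hin.exp
  have hd := ((hasDerivAt_physHermite i x).const_mul
      ((Real.sqrt (Real.sqrt Real.pi * 2 ^ i * Nat.factorial i))⁻¹)).mul he
  have : hermiteFun i = fun y => (Real.sqrt (Real.sqrt Real.pi * 2 ^ i * Nat.factorial i))⁻¹ *
      physHermite i y * Real.exp (-y ^ 2 / 2) := rfl
  rw [this]
  refine hd.congr_deriv ?_
  unfold hermiteFun
  linear_combination (-(physHermite (i-1) x * Real.exp (-x^2/2))) * e2 i

lemma hasDerivAt_hermiteFun_sq (i : ℕ) (x : ℝ) :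
    HasDerivAt (fun y => hermiteFun i y ^ 2)
      ((fun j : ℕ => Real.sqrt (2*(j:ℝ)) * (hermiteFun j x * hermiteFun (j-1) x)) i
        - (fun j : ℕ => Real.sqrt (2*(j:ℝ)) * (hermiteFun j x * hermiteFun (j-1) x)) (i+1)) x := by
  have h := (hermiteFun_hasDerivAt i x).pow 2
  refine h.congr_deriv ?_
  simp only [Nat.add_sub_cancel, pow_one, Nat.cast_add, Nat.cast_one]
  linear_combination (hermiteFun i x) * hermiteFun_succ i x

lemma hasDerivAt_S (k : ℕ) (x : ℝ) :
    HasDerivAt (fun y => ∑ i ∈ Finset.range k, hermiteFun i y ^ 2)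
      (-(Real.sqrt (2*(k:ℝ)) * (hermiteFun k x * hermiteFun (k-1) x))) x := by
  have h := HasDerivAt.sum (fun i (_ : i ∈ Finset.range k) => hasDerivAt_hermiteFun_sq i x)
  have hsum := Finset.sum_range_sub'
    (f := fun j : ℕ => Real.sqrt (2*(j:ℝ)) * (hermiteFun j x * hermiteFun (j-1) x)) k
  rw [hsum] at h
  simpa [Finset.sum_fn] using h

lemma hermiteFun_continuous (i : ℕ) : Continuous (hermiteFun i) := by
  have : Differentiable ℝ (hermiteFun i) :=
    fun x => (hermiteFun_hasDerivAt i x).differentiableAt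
  exact this.continuous

lemma integral_abs_mul_le (k : ℕ) :
    ∫ x : ℝ, |hermiteFun k x * hermiteFun (k-1) x| ≤ 1 := by
  have hint : Integrable (fun x : ℝ => |hermiteFun k x * hermiteFun (k-1) x|) :=
    (integrable_hermiteFun_mul k (k-1)).abs
  have hint2 : Integrable (fun x : ℝ => (hermiteFun k x ^ 2 + hermiteFun (k-1) x ^ 2) / 2) :=
    ((integrable_hermiteFun_sq k).add (integrable_hermiteFun_sq (k-1))).div_const 2
  have hle : ∀ x : ℝ, |hermiteFun k x * hermiteFun (k-1) x|
      ≤ (hermiteFun k x ^ 2 + hermiteFun (k-1) x ^ 2) / 2 := by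
    intro x
    set a := hermiteFun k x; set b := hermiteFun (k-1) x
    rw [abs_mul]
    nlinarith [sq_nonneg (|a| - |b|), sq_abs a, sq_abs b, abs_nonneg a, abs_nonneg b]
  calc ∫ x : ℝ, |hermiteFun k x * hermiteFun (k-1) x|
      ≤ ∫ x : ℝ, (hermiteFun k x ^ 2 + hermiteFun (k-1) x ^ 2) / 2 :=
        integral_mono hint hint2 hle
    _ = ((∫ x : ℝ, hermiteFun k x ^ 2) + ∫ x : ℝ, hermiteFun (k-1) x ^ 2) / 2 := by
        rw [integral_div, integral_add (integrable_hermiteFun_sq k)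
          (integrable_hermiteFun_sq (k-1))]
    _ = 1 := by rw [integral_hermiteFun_sq, integral_hermiteFun_sq]; norm_num

lemma physHermite_zero_sq_le (n : ℕ) :
    (physHermite n 0) ^ 2 ≤ 2 ^ n * (Nat.factorial n : ℝ) := by
  induction n using Nat.strong_induction_on with
  | _ n ih =>
    match n with
    | 0 => simp [physHermite_zero]
    | 1 => simp [physHermite_one]
    | n + 2 =>
      have h := ih n (by omega)
      have hv : physHermite (n+2) 0 = -(2 * ((n:ℝ)+1)) * physHermite n 0 := by
        rw [physHermite_succ_succ]; push_cast; ring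
      rw [hv]
      have hfac : ((Nat.factorial (n+2) : ℝ)) = ((n:ℝ)+2) * ((n:ℝ)+1) * (Nat.factorial n : ℝ) := by
        rw [Nat.factorial_succ, Nat.factorial_succ]; push_cast; ring
      have hn0 : (0:ℝ) ≤ (n:ℝ) := Nat.cast_nonneg n
      have hp : (0:ℝ) < (2:ℝ) ^ n := by positivity
      have hf0 : (0:ℝ) ≤ (Nat.factorial n : ℝ) := Nat.cast_nonneg _
      have base : (0:ℝ) ≤ 4 * 2^n * (Nat.factorial n:ℝ) * ((n:ℝ)+1) := by positivity
      have mid : 4 * 2^n * (Nat.factorial n:ℝ) * ((n:ℝ)+1) * ((n:ℝ)+1)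
          ≤ 4 * 2^n * (Nat.factorial n:ℝ) * ((n:ℝ)+1) * ((n:ℝ)+2) :=
        mul_le_mul_of_nonneg_left (by linarith) base
      have scaled := mul_le_mul_of_nonneg_left h
        (show (0:ℝ) ≤ 4*((n:ℝ)+1)^2 by positivity)
      have hpow : (2:ℝ)^(n+2) = 4 * 2^n := by rw [pow_succ, pow_succ]; ring
      rw [hfac, hpow]
      nlinarith [scaled, mid]

lemma hermiteFun_zero_sq_le (i : ℕ) : hermiteFun i 0 ^ 2 ≤ 1 := by
  rw [hermiteFun_sq]
  have hB : (0:ℝ) < 2 ^ i * (Nat.factorial i : ℝ) := by positivity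
  have hsqpi : (1:ℝ) ≤ Real.sqrt Real.pi := by
    rw [show (1:ℝ) = Real.sqrt 1 by simp]
    exact Real.sqrt_le_sqrt (by linarith [Real.pi_gt_three])
  have h1 : physHermite i 0 * physHermite i 0 * Real.exp (-(0:ℝ) ^ 2)
      = (physHermite i 0) ^ 2 := by norm_num; ring
  rw [h1]
  have h2 := physHermite_zero_sq_le i
  calc (Real.sqrt Real.pi * 2 ^ i * (Nat.factorial i : ℝ))⁻¹ * (physHermite i 0) ^ 2
      ≤ (Real.sqrt Real.pi * 2 ^ i * (Nat.factorial i : ℝ))⁻¹ * (2 ^ i * (Nat.factorial i : ℝ)) := by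
        apply mul_le_mul_of_nonneg_left h2
        exact inv_nonneg.mpr (normConst_pos i).le
    _ = (Real.sqrt Real.pi)⁻¹ := by
        rw [mul_assoc, mul_inv]
        rw [mul_assoc, inv_mul_cancel₀ (by positivity : (2:ℝ) ^ i * (Nat.factorial i : ℝ) ≠ 0),
          mul_one]
    _ ≤ 1 := by
        rw [inv_le_one_iff₀]; right; linarith

lemma S_bound (k : ℕ) (u : ℝ) :
    ∑ i ∈ Finset.range k, hermiteFun i u ^ 2 ≤ (k:ℝ) + Real.sqrt (2*(k:ℝ)) := by
  set g : ℝ → ℝ := fun x => -(Real.sqrt (2*(k:ℝ)) * (hermiteFun k x * hermiteFun (k-1) x))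
    with hgdef
  have hcont : Continuous g :=
    ((continuous_const.mul ((hermiteFun_continuous k).mul (hermiteFun_continuous (k-1))))).neg
  have hint : Integrable g :=
    (((integrable_hermiteFun_mul k (k-1)).const_mul _)).neg
  have hftc := intervalIntegral.integral_eq_sub_of_hasDerivAt
    (f := fun y => ∑ i ∈ Finset.range k, hermiteFun i y ^ 2) (f' := g)
    (fun x _ => hasDerivAt_S k x) (hcont.intervalIntegrable 0 u)
  have habs : |∫ x in (0:ℝ)..u, g x| ≤ Real.sqrt (2*(k:ℝ)) := by
    have h1 : ‖∫ x in (0:ℝ)..u, g x‖ ≤ ∫ x in Set.uIoc (0:ℝ) u, ‖g x‖ :=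
      intervalIntegral.norm_integral_le_integral_norm_uIoc
    have h2 : ∫ x in Set.uIoc (0:ℝ) u, ‖g x‖ ≤ ∫ x : ℝ, ‖g x‖ :=
      setIntegral_le_integral hint.norm (Filter.Eventually.of_forall fun x => norm_nonneg _)
    have h3 : (∫ x : ℝ, ‖g x‖)
        = Real.sqrt (2*(k:ℝ)) * ∫ x : ℝ, |hermiteFun k x * hermiteFun (k-1) x| := by
      rw [← integral_const_mul]
      congr 1; funext x
      rw [hgdef]
      simp only [Real.norm_eq_abs, abs_neg, abs_mul,
        abs_of_nonneg (Real.sqrt_nonneg (2*(k:ℝ)))]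
    have h4 : Real.sqrt (2*(k:ℝ)) * (∫ x : ℝ, |hermiteFun k x * hermiteFun (k-1) x|)
        ≤ Real.sqrt (2*(k:ℝ)) * 1 :=
      mul_le_mul_of_nonneg_left (integral_abs_mul_le k) (Real.sqrt_nonneg _)
    rw [Real.norm_eq_abs] at h1
    rw [mul_one] at h4
    rw [h3] at h2
    exact h1.trans (h2.trans h4)
  have hS0 : ∑ i ∈ Finset.range k, hermiteFun i 0 ^ 2 ≤ (k:ℝ) := by
    calc ∑ i ∈ Finset.range k, hermiteFun i 0 ^ 2 ≤ ∑ _i ∈ Finset.range k, (1:ℝ) :=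
          Finset.sum_le_sum (fun i _ => hermiteFun_zero_sq_le i)
      _ = (k:ℝ) := by simp
  have := abs_le.mp habs
  linarith [hftc, this.1, this.2]

/-- Bound on `‖Z_k(u)‖² = Σ_{i<k} ℋ_i(u)²`: it is at most `C k` uniformly in `u`, and hence
`‖Z_k(u)‖ ≤ C' √k` uniformly in `u`. -/
theorem Zk_norm_bound :
    (∃ C > (0 : ℝ), ∀ k : ℕ, 1 ≤ k → ∀ u : ℝ,
      ∑ i ∈ Finset.range k, hermiteFun i u ^ 2 ≤ C * k) ∧
    (∃ C' > (0 : ℝ), ∀ k : ℕ, 1 ≤ k → ∀ u : ℝ,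
      Real.sqrt (∑ i ∈ Finset.range k, hermiteFun i u ^ 2) ≤ C' * Real.sqrt k) := by
  have main : ∀ k : ℕ, 1 ≤ k → ∀ u : ℝ,
      ∑ i ∈ Finset.range k, hermiteFun i u ^ 2 ≤ 3 * k := by
    intro k hk u
    have hk1 : (1:ℝ) ≤ (k:ℝ) := by exact_mod_cast hk
    have h := S_bound k u
    have hsqrt2 : Real.sqrt (2*(k:ℝ)) ≤ 2 * (k:ℝ) := by
      have h2 : (1:ℝ) ≤ 2*(k:ℝ) := by linarith
      calc Real.sqrt (2*(k:ℝ)) ≤ Real.sqrt ((2*(k:ℝ))^2) :=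
            Real.sqrt_le_sqrt (by nlinarith)
        _ = 2*(k:ℝ) := Real.sqrt_sq (by linarith)
    linarith
  constructor
  · exact ⟨3, by norm_num, main⟩
  · refine ⟨2, by norm_num, fun k hk u => ?_⟩
    have hk1 : (1:ℝ) ≤ (k:ℝ) := by exact_mod_cast hk
    have h := Real.sqrt_le_sqrt (main k hk u)
    calc Real.sqrt (∑ i ∈ Finset.range k, hermiteFun i u ^ 2)
        ≤ Real.sqrt (3 * k) := h
      _ = Real.sqrt 3 * Real.sqrt k := Real.sqrt_mul (by norm_num) _
      _ ≤ 2 * Real.sqrt k := by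
          have h3 : Real.sqrt 3 ≤ 2 := by
            rw [show (2:ℝ) = Real.sqrt 4 by rw [show (4:ℝ) = 2^2 by norm_num, Real.sqrt_sq]; norm_num]
            exact Real.sqrt_le_sqrt (by norm_num)
          exact mul_le_mul_of_nonneg_right h3 (Real.sqrt_nonneg _)
end

section
/- There exists a constant C > 0 such that for every integer k ≥ 1 and every u ∈ ℝ, Σ_{i=0}^{k−1} (ℋ_i'(u))² ≤ C k², where ℋ_i' is the derivative of the i-th Hermite function. -/
open MeasureTheory Real Filter

namespace HFaux

lemma pH_zero (x : ℝ) : physHermite 0 x = 1 := rfl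
lemma pH_one (x : ℝ) : physHermite 1 x = 2 * x := rfl
lemma pH_ss (n : ℕ) (x : ℝ) :
    physHermite (n+2) x = 2*x*physHermite (n+1) x - 2*((n:ℝ)+1)*physHermite n x := rfl

lemma pH_rec (n : ℕ) (x : ℝ) :
    physHermite (n+1) x = 2*x*physHermite n x - 2*(n:ℝ)*physHermite (n-1) x := by
  cases n with
  | zero => simp [pH_one, pH_zero]
  | succ m => rw [pH_ss]; push_cast; simp

/-- the derivative of physHermite n -/
noncomputable def dP (n : ℕ) (x : ℝ) : ℝ := 2*(n:ℝ)*physHermite (n-1) x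

lemma hasDerivAt_pH_aux : ∀ n : ℕ,
    (∀ x, HasDerivAt (physHermite n) (dP n x) x) ∧
    (∀ x, HasDerivAt (physHermite (n+1)) (dP (n+1) x) x) := by
  intro n
  induction n with
  | zero =>
    constructor
    · intro x
      exact (hasDerivAt_const x (1:ℝ)).congr_deriv (by simp [dP])
    · intro x
      have : HasDerivAt (fun x : ℝ => 2*x) 2 x := by
        simpa using (hasDerivAt_id x).const_mul (2:ℝ)
      exact this.congr_deriv (by simp [dP, pH_zero])
  | succ m ih =>
    refine ⟨ih.2, ?_⟩
    intro x
    have h1 := ih.1 x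
    have h2 := ih.2 x
    have hx : HasDerivAt (fun y : ℝ => 2*y*physHermite (m+1) y)
        (2*physHermite (m+1) x + 2*x*dP (m+1) x) x := by
      have := ((hasDerivAt_id x).const_mul (2:ℝ)).mul h2
      refine this.congr_deriv ?_; simp only [id, mul_one]
    have hsub : HasDerivAt (physHermite (m+2))
        (2*physHermite (m+1) x + 2*x*dP (m+1) x - 2*((m:ℝ)+1)*dP m x) x := by
      have h := hx.sub (h1.const_mul (2*((m:ℝ)+1)))
      have h' : HasDerivAt (physHermite (m+2))
          (2*physHermite (m+1) x + 2*x*dP (m+1) x - 2*((m:ℝ)+1)*dP m x) x := by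
        refine h.congr_deriv ?_; ring
      exact h'
    refine hsub.congr_deriv ?_
    have hr := pH_rec m x
    have e1 : m+2-1 = m+1 := rfl
    have e2 : m+1-1 = m := rfl
    simp only [dP, e1, e2]
    rw [hr]
    push_cast
    ring

lemma hasDerivAt_pH (n : ℕ) (x : ℝ) : HasDerivAt (physHermite n) (dP n x) x :=
  (hasDerivAt_pH_aux n).1 x

noncomputable def c (n : ℕ) : ℝ := (Real.sqrt (Real.sqrt Real.pi * 2 ^ n * Nat.factorial n))⁻¹

noncomputable def G (n : ℕ) (x : ℝ) : ℝ :=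
  c n * (2*(n:ℝ)*physHermite (n-1) x - x * physHermite n x) * Real.exp (-x^2/2)

lemma hasDerivAt_exp_part (x : ℝ) :
    HasDerivAt (fun y : ℝ => Real.exp (-y^2/2)) (-x * Real.exp (-x^2/2)) x := by
  have h : HasDerivAt (fun y : ℝ => -y^2/2) (-x) x := by
    have := ((hasDerivAt_pow 2 x).neg).div_const (2:ℝ)
    refine this.congr_deriv ?_; ring
  have := h.exp
  refine this.congr_deriv ?_; ring

lemma hermiteFun_eq (n : ℕ) :
    hermiteFun n = fun x => c n * physHermite n x * Real.exp (-x^2/2) := rfl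

lemma hasDerivAt_hermiteFun (n : ℕ) (x : ℝ) :
    HasDerivAt (hermiteFun n) (G n x) x := by
  rw [hermiteFun_eq]
  have h1 := ((hasDerivAt_pH n x).const_mul (c n)).mul (hasDerivAt_exp_part x)
  refine h1.congr_deriv ?_
  simp only [G, dP]
  ring

lemma key (n : ℕ) (x : ℝ) :
    2*(n:ℝ)*physHermite n x
      = 4*(n:ℝ)*x*physHermite (n-1) x - 4*(n:ℝ)*((n:ℝ)-1)*physHermite (n-1-1) x := by
  cases n with
  | zero => push_cast; ring
  | succ m =>
    have hr := pH_rec m x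
    have e2 : m+1-1 = m := rfl
    rw [e2, hr]
    push_cast
    ring

lemma hasDerivAt_G (n : ℕ) (x : ℝ) :
    HasDerivAt (G n) ((x^2 - 2*(n:ℝ) - 1) * hermiteFun n x) x := by
  have hin : HasDerivAt (fun y : ℝ => 2*(n:ℝ)*physHermite (n-1) y - y * physHermite n y)
      (2*(n:ℝ)*dP (n-1) x - (physHermite n x + x * dP n x)) x := by
    have h1 := (hasDerivAt_pH (n-1) x).const_mul (2*(n:ℝ))
    have h2 := (hasDerivAt_id x).mul (hasDerivAt_pH n x)
    refine (h1.sub h2).congr_deriv ?_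
    simp only [id]
    ring
  have h := (hin.const_mul (c n)).mul (hasDerivAt_exp_part x)
  refine h.congr_deriv ?_
  simp only [dP, hermiteFun_eq]
  have hk := key n x
  have hk2 : (n:ℝ) * ((n-1 : ℕ):ℝ) = (n:ℝ)*((n:ℝ)-1) := by
    cases n with
    | zero => push_cast; ring
    | succ m => have : m+1-1 = m := rfl; rw [this]; push_cast; ring
  linear_combination (c n * Real.exp (-x^2/2)) * hk
    + (4 * physHermite (n-1-1) x * c n * Real.exp (-x^2/2)) * hk2

lemma tendsto_pow_exp (m : ℕ) :
    Tendsto (fun x : ℝ => x^m * Real.exp (-x^2/2)) atTop (nhds 0) := by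
  refine tendsto_of_tendsto_of_tendsto_of_le_of_le'
    tendsto_const_nhds (tendsto_pow_mul_exp_neg_atTop_nhds_zero m) ?_ ?_
  · filter_upwards [eventually_ge_atTop (2:ℝ)] with x hx
    positivity
  · filter_upwards [eventually_ge_atTop (2:ℝ)] with x hx
    have h1 : Real.exp (-x^2/2) ≤ Real.exp (-x) := by
      apply Real.exp_le_exp.2; nlinarith
    have h2 : (0:ℝ) ≤ x^m := by positivity
    exact mul_le_mul_of_nonneg_left h1 h2

lemma tendsto_P_aux : ∀ n : ℕ,
    (∀ m, Tendsto (fun x : ℝ => x^m * physHermite n x * Real.exp (-x^2/2)) atTop (nhds 0)) ∧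
    (∀ m, Tendsto (fun x : ℝ => x^m * physHermite (n+1) x * Real.exp (-x^2/2)) atTop (nhds 0)) := by
  intro n
  induction n with
  | zero =>
    constructor
    · intro m
      have := tendsto_pow_exp m
      refine this.congr fun x => ?_
      rw [pH_zero]; ring
    · intro m
      have := (tendsto_pow_exp (m+1)).const_mul (2:ℝ)
      rw [mul_zero] at this
      refine this.congr fun x => ?_
      rw [pH_one]; ring
  | succ m ih =>
    refine ⟨ih.2, ?_⟩
    intro j
    have h1 := (ih.2 (j+1)).const_mul (2:ℝ)
    have h2 := (ih.1 j).const_mul (2*((m:ℝ)+1))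
    have h := h1.sub h2
    rw [mul_zero, mul_zero, sub_zero] at h
    refine h.congr fun x => ?_
    rw [pH_ss]; ring

lemma tendsto_F (n : ℕ) : Tendsto (hermiteFun n) atTop (nhds 0) := by
  have := ((tendsto_P_aux n).1 0).const_mul (c n)
  rw [mul_zero] at this
  refine this.congr fun x => ?_
  rw [hermiteFun_eq]; ring

lemma tendsto_G (n : ℕ) : Tendsto (G n) atTop (nhds 0) := by
  have h1 := ((tendsto_P_aux (n-1)).1 0).const_mul (2*(n:ℝ))
  have h2 := (tendsto_P_aux n).1 1
  have h := (h1.sub h2).const_mul (c n)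
  simp only [mul_zero, sub_zero] at h
  refine h.congr fun x => ?_
  simp only [G]; ring

noncomputable def E (n : ℕ) (x : ℝ) : ℝ :=
  (G n x)^2 + (2*(n:ℝ)+1-x^2) * (hermiteFun n x)^2

lemma hasDerivAt_E (n : ℕ) (x : ℝ) :
    HasDerivAt (E n) (-2*x*(hermiteFun n x)^2) x := by
  have hG2 := (hasDerivAt_G n x).pow 2
  have hq : HasDerivAt (fun y : ℝ => 2*(n:ℝ)+1-y^2) (-(2*x)) x := by
    have := (hasDerivAt_const x (2*(n:ℝ)+1)).sub (hasDerivAt_pow 2 x)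
    refine this.congr_deriv ?_; ring
  have hF2 := (hasDerivAt_hermiteFun n x).pow 2
  have h := hG2.add (hq.mul hF2)
  refine h.congr_deriv ?_
  simp only [Pi.pow_apply]; ring

noncomputable def hh (n : ℕ) (x : ℝ) : ℝ := hermiteFun n x * G n x

lemma hasDerivAt_hh (n : ℕ) (x : ℝ) :
    HasDerivAt (hh n) ((G n x)^2 + (x^2-2*(n:ℝ)-1)*(hermiteFun n x)^2) x := by
  have h := (hasDerivAt_hermiteFun n x).mul (hasDerivAt_G n x)
  refine h.congr_deriv ?_; ring

lemma hasDerivAt_Gsq (n : ℕ) (x : ℝ) :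
    HasDerivAt (fun y => (G n y)^2) (2*(x^2-2*(n:ℝ)-1)*hh n x) x := by
  have h := (hasDerivAt_G n x).pow 2
  refine h.congr_deriv ?_; simp only [hh, hermiteFun_eq, G]; ring

lemma E_antitone (n : ℕ) : AntitoneOn (E n) (Set.Ici 0) := by
  refine antitoneOn_of_deriv_nonpos (convex_Ici 0) ?_ ?_ ?_
  · exact fun x _ => ((hasDerivAt_E n x).differentiableAt).continuousAt.continuousWithinAt
  · exact fun x _ => ((hasDerivAt_E n x).differentiableAt).differentiableWithinAt
  · intro x hx
    rw [interior_Ici] at hx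
    rw [(hasDerivAt_E n x).deriv]
    have : (0:ℝ) < x := hx
    nlinarith [sq_nonneg (hermiteFun n x)]

lemma hh_nonpos (n : ℕ) (x : ℝ) (hx : Real.sqrt (2*(n:ℝ)+1) ≤ x) : hh n x ≤ 0 := by
  set a := Real.sqrt (2*(n:ℝ)+1) with ha
  have ha2 : a^2 = 2*(n:ℝ)+1 := Real.sq_sqrt (by positivity)
  have ha0 : 0 ≤ a := Real.sqrt_nonneg _
  have hmono : MonotoneOn (hh n) (Set.Ici a) := by
    refine monotoneOn_of_deriv_nonneg (convex_Ici a) ?_ ?_ ?_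
    · exact fun y _ => ((hasDerivAt_hh n y).differentiableAt).continuousAt.continuousWithinAt
    · exact fun y _ => ((hasDerivAt_hh n y).differentiableAt).differentiableWithinAt
    · intro y hy
      rw [interior_Ici] at hy
      rw [(hasDerivAt_hh n y).deriv]
      have hya : a < y := hy
      have hy2 : 2*(n:ℝ)+1 ≤ y^2 := by
        rw [← ha2]; exact pow_le_pow_left₀ ha0 hya.le 2
      nlinarith [sq_nonneg (G n y), sq_nonneg (hermiteFun n y)]
  have hlim : Tendsto (hh n) atTop (nhds 0) := by
    have := (tendsto_F n).mul (tendsto_G n)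
    rw [mul_zero] at this
    exact this
  refine ge_of_tendsto hlim ?_
  filter_upwards [eventually_ge_atTop x] with y hy
  exact hmono hx (le_trans hx hy) hy

lemma G_sq_le (n : ℕ) (u : ℝ) (hu : 0 ≤ u) : (G n u)^2 ≤ E n 0 := by
  set a := Real.sqrt (2*(n:ℝ)+1) with ha
  have ha2 : a^2 = 2*(n:ℝ)+1 := Real.sq_sqrt (by positivity)
  have ha0 : 0 ≤ a := Real.sqrt_nonneg _
  rcases le_total u a with h | h
  · have h1 : (G n u)^2 ≤ E n u := by
      have hu2 : u^2 ≤ 2*(n:ℝ)+1 := by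
        rw [← ha2]; exact pow_le_pow_left₀ hu h 2
      have := sq_nonneg (hermiteFun n u)
      simp only [E]; nlinarith
    exact h1.trans (E_antitone n (Set.self_mem_Ici) hu hu)
  · have hgant : AntitoneOn (fun y => (G n y)^2) (Set.Ici a) := by
      refine antitoneOn_of_deriv_nonpos (convex_Ici a) ?_ ?_ ?_
      · exact fun y _ => ((hasDerivAt_Gsq n y).differentiableAt).continuousAt.continuousWithinAt
      · exact fun y _ => ((hasDerivAt_Gsq n y).differentiableAt).differentiableWithinAt
      · intro y hy
        rw [interior_Ici] at hy
        rw [(hasDerivAt_Gsq n y).deriv]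
        have hya : a < y := hy
        have hy2 : 2*(n:ℝ)+1 ≤ y^2 := by
          rw [← ha2]; exact pow_le_pow_left₀ ha0 hya.le 2
        have hhn := hh_nonpos n y hya.le
        nlinarith
    have h1 : (G n u)^2 ≤ (G n a)^2 :=
      hgant (Set.self_mem_Ici) h h
    have h2 : (G n a)^2 ≤ E n a := by
      simp only [E, ha2]; nlinarith [sq_nonneg (hermiteFun n a)]
    have h3 : E n a ≤ E n 0 := E_antitone n (Set.self_mem_Ici) ha0 ha0
    linarith

lemma pH_parity_aux : ∀ n : ℕ,
    (∀ x : ℝ, physHermite n (-x) = (-1:ℝ)^n * physHermite n x) ∧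
    (∀ x : ℝ, physHermite (n+1) (-x) = (-1:ℝ)^(n+1) * physHermite (n+1) x) := by
  intro n
  induction n with
  | zero =>
    refine ⟨fun x => by simp [pH_zero], fun x => by simp [pH_one]⟩
  | succ m ih =>
    refine ⟨ih.2, fun x => ?_⟩
    rw [pH_ss, pH_ss, ih.1 x, ih.2 x]
    ring

lemma G_neg (n : ℕ) (u : ℝ) : G n (-u) = (-1:ℝ)^(n+1) * G n u := by
  have hexp : Real.exp (-(-u)^2/2) = Real.exp (-u^2/2) := by rw [neg_sq]
  cases n with
  | zero =>
    simp only [G, pH_zero, hexp]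
    push_cast
    ring
  | succ m =>
    have e2 : m+1-1 = m := rfl
    simp only [G, e2, hexp, (pH_parity_aux m).1 u, (pH_parity_aux m).2 u]
    ring

lemma G_neg_sq (n : ℕ) (u : ℝ) : (G n (-u))^2 = (G n u)^2 := by
  rw [G_neg]
  rw [mul_pow, ← pow_mul, mul_comm (n+1) 2, pow_mul]
  norm_num

lemma c_sq (n : ℕ) : (c n)^2 = (Real.sqrt Real.pi * 2^n * Nat.factorial n)⁻¹ := by
  rw [c, inv_pow, Real.sq_sqrt]
  positivity

lemma P0_sq : ∀ m : ℕ, (physHermite m 0)^2 ≤ 2^m * (Nat.factorial m : ℝ) := by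
  have key : ∀ m : ℕ,
      ((physHermite m 0)^2 ≤ 2^m * (Nat.factorial m : ℝ)) ∧
      ((physHermite (m+1) 0)^2 ≤ 2^(m+1) * (Nat.factorial (m+1) : ℝ)) := by
    intro m
    induction m with
    | zero =>
      constructor
      · rw [pH_zero]; norm_num
      · rw [pH_one]; norm_num
    | succ j ih =>
      refine ⟨ih.2, ?_⟩
      rw [pH_ss]
      have hfac : (Nat.factorial (j+2) : ℝ) = ((j:ℝ)+2)*((j:ℝ)+1)*(Nat.factorial j : ℝ) := by
        rw [Nat.factorial_succ, Nat.factorial_succ]; push_cast; ring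
      have h1 := ih.1
      have hj : (0:ℝ) ≤ (j:ℝ) := Nat.cast_nonneg j
      have hfj : (0:ℝ) ≤ (Nat.factorial j : ℝ) := Nat.cast_nonneg _
      have hp : (0:ℝ) < 2^j := by positivity
      rw [hfac]
      have : (2*(0:ℝ)*physHermite (j+1) 0 - 2*((j:ℝ)+1)*physHermite j 0)^2
          = 4*((j:ℝ)+1)^2*(physHermite j 0)^2 := by ring
      rw [this]
      have h2 : 4*((j:ℝ)+1)^2*(physHermite j 0)^2 ≤ 4*((j:ℝ)+1)^2*(2^j * (Nat.factorial j:ℝ)) := by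
        have := sq_nonneg ((j:ℝ)+1)
        nlinarith
      refine h2.trans ?_
      have e : (2:ℝ)^(j+2) = 4 * 2^j := by ring
      rw [e]
      nlinarith
  exact fun m => (key m).1

lemma sqrt_pi_ge_one : (1:ℝ) ≤ Real.sqrt Real.pi := by
  rw [show (1:ℝ) = Real.sqrt 1 by simp]
  exact Real.sqrt_le_sqrt (by linarith [Real.pi_gt_three])

lemma F0_sq (n : ℕ) : (hermiteFun n 0)^2 ≤ 1 := by
  have : (hermiteFun n 0)^2 = (c n)^2 * (physHermite n 0)^2 := by
    rw [hermiteFun_eq]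
    simp [mul_pow]
  rw [this, c_sq]
  have hP := P0_sq n
  have ht : (0:ℝ) < Real.sqrt Real.pi * 2^n * Nat.factorial n := by
    have := sqrt_pi_ge_one
    positivity
  rw [inv_mul_le_iff₀ ht, mul_one]
  calc (physHermite n 0)^2 ≤ 2^n * (Nat.factorial n : ℝ) := hP
    _ ≤ Real.sqrt Real.pi * 2^n * Nat.factorial n := by
        have hX : (0:ℝ) ≤ 2^n * (Nat.factorial n : ℝ) := by positivity
        nlinarith [sqrt_pi_ge_one, mul_nonneg hX (sub_nonneg.2 sqrt_pi_ge_one)]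

lemma G0_sq (n : ℕ) : (G n 0)^2 ≤ 2*(n:ℝ) := by
  cases n with
  | zero =>
    simp [G, pH_zero]
  | succ m =>
    have e2 : m+1-1 = m := rfl
    have hG0 : G (m+1) 0 = c (m+1) * (2*((m:ℝ)+1)*physHermite m 0) := by
      simp only [G, e2]
      push_cast
      norm_num
    rw [hG0]
    have hc := c_sq (m+1)
    have hP := P0_sq m
    have ht : (0:ℝ) < Real.sqrt Real.pi * 2^(m+1) * Nat.factorial (m+1) := by
      have := sqrt_pi_ge_one
      positivity
    have hfac : (Nat.factorial (m+1) : ℝ) = ((m:ℝ)+1)*(Nat.factorial m : ℝ) := by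
      rw [Nat.factorial_succ]; push_cast; ring
    have hexp : (c (m+1) * (2*((m:ℝ)+1)*physHermite m 0))^2
        = 4*((m:ℝ)+1)^2*(physHermite m 0)^2 * (Real.sqrt Real.pi * 2^(m+1) * Nat.factorial (m+1))⁻¹ := by
      rw [mul_pow, hc]; ring
    rw [hexp]
    rw [inv_eq_one_div, mul_div_assoc' , div_le_iff₀ ht]
    have h1 : (0:ℝ) ≤ ((m:ℝ)+1)^2 := sq_nonneg _
    have hm : (0:ℝ) ≤ (m:ℝ) := Nat.cast_nonneg m
    have hfm : (1:ℝ) ≤ (Nat.factorial m : ℝ) := by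
      exact_mod_cast Nat.one_le_iff_ne_zero.2 (Nat.factorial_pos m).ne'
    have hsp := sqrt_pi_ge_one
    have hpm : (0:ℝ) < 2^m := by positivity
    -- goal: 4*(m+1)^2*(P m 0)^2 * 1 ≤ 2*(m+1) * (sqrt pi * 2^(m+1) * (m+1)!)
    rw [hfac]
    have step : 4*((m:ℝ)+1)^2*(physHermite m 0)^2 ≤ 2*((m:ℝ)+1) * (2^(m+1) * (((m:ℝ)+1)*(Nat.factorial m))) := by
      have h2 : (physHermite m 0)^2 ≤ 2^m * (Nat.factorial m : ℝ) := hP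
      have e : (2:ℝ)^(m+1) = 2 * 2^m := by ring
      rw [e]
      nlinarith
    push_cast
    have hX : (0:ℝ) ≤ 2^(m+1)*(((m:ℝ)+1)*(Nat.factorial m)) := by positivity
    have hint : (0:ℝ) ≤ (2*((m:ℝ)+1) * (2^(m+1)*(((m:ℝ)+1)*(Nat.factorial m)))) * (Real.sqrt Real.pi - 1) := by
      have h2m : (0:ℝ) ≤ 2*((m:ℝ)+1) := by positivity
      exact mul_nonneg (mul_nonneg h2m hX) (by linarith)
    nlinarith [step, hint]

lemma E0_le (n : ℕ) : E n 0 ≤ 4*(n:ℝ)+1 := by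
  have h1 := G0_sq n
  have h2 := F0_sq n
  have h3 : (0:ℝ) ≤ 2*(n:ℝ)+1 := by positivity
  simp only [E]
  nlinarith [sq_nonneg (hermiteFun n 0)]

lemma main_bound (n : ℕ) (u : ℝ) : (deriv (hermiteFun n) u)^2 ≤ 4*(n:ℝ)+1 := by
  rw [(hasDerivAt_hermiteFun n u).deriv]
  have key : (G n u)^2 ≤ E n 0 := by
    rcases le_total 0 u with h | h
    · exact G_sq_le n u h
    · have : u = -(-u) := by ring
      rw [this, G_neg_sq]
      exact G_sq_le n (-u) (by linarith)
  exact key.trans (E0_le n)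

end HFaux

/-- Bound on the sum of squared derivatives of Hermite functions:
`Σ_{i<k} (ℋ_i'(u))² ≤ C k²` uniformly in `u`. -/
theorem hermiteFun_deriv_sum_bound :
    ∃ C > (0 : ℝ), ∀ k : ℕ, 1 ≤ k → ∀ u : ℝ,
      ∑ i ∈ Finset.range k, (deriv (hermiteFun i) u) ^ 2 ≤ C * (k : ℝ) ^ 2 := by

  refine ⟨5, by norm_num, ?_⟩
  intro k hk u
  have hkR : (1:ℝ) ≤ (k:ℝ) := by exact_mod_cast hk
  calc ∑ i ∈ Finset.range k, (deriv (hermiteFun i) u) ^ 2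
      ≤ ∑ i ∈ Finset.range k, (5*(k:ℝ)) := by
        refine Finset.sum_le_sum ?_
        intro i hi
        have hik : i < k := Finset.mem_range.1 hi
        have hikR : (i:ℝ) ≤ (k:ℝ) - 1 := by
          have : (i:ℝ) + 1 ≤ (k:ℝ) := by exact_mod_cast hik
          linarith
        have := HFaux.main_bound i u
        linarith
    _ = (k:ℝ) * (5*(k:ℝ)) := by
        rw [Finset.sum_const, Finset.card_range, nsmul_eq_mul]
    _ = 5 * (k:ℝ)^2 := by ring
end

section
/- Identifiability of the single-index model: let d ≥ 1, let g₁, g₂ : ℝ → ℝ be continuous functions with g₁(u) → 0 and g₂(u) → 0 as |u| → ∞, with g₁ not identically zero, and let θ₁, θ₂ ∈ ℝ^d be unit vectors whose first nonzero component is positive. If g₁(θ₁^⊤ x) = g₂(θ₂^⊤ x) for all x ∈ ℝ^d, then θ₁ = θ₂ and g₁ = g₂. -/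
open Filter

/-- Identifiability of the single-index model: if `g₁, g₂` are continuous, vanish at infinity,
`g₁` is not identically zero, `θ₁, θ₂` are unit vectors whose first nonzero component is
positive, and `g₁(θ₁ᵀx) = g₂(θ₂ᵀx)` for all `x ∈ ℝ^d`, then `θ₁ = θ₂` and `g₁ = g₂`. -/
theorem single_index_identifiable (d : ℕ) (hd : 1 ≤ d)
    (g₁ g₂ : ℝ → ℝ) (hc₁ : Continuous g₁) (hc₂ : Continuous g₂)
    (h0₁ : Tendsto g₁ (cocompact ℝ) (nhds 0))
    (h0₂ : Tendsto g₂ (cocompact ℝ) (nhds 0))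
    (hne : ∃ u : ℝ, g₁ u ≠ 0)
    (θ₁ θ₂ : Fin d → ℝ)
    (hθ₁norm : ∑ i, θ₁ i ^ 2 = 1) (hθ₂norm : ∑ i, θ₂ i ^ 2 = 1)
    (hθ₁pos : ∀ i : Fin d, (∀ j < i, θ₁ j = 0) → θ₁ i ≠ 0 → 0 < θ₁ i)
    (hθ₂pos : ∀ i : Fin d, (∀ j < i, θ₂ j = 0) → θ₂ i ≠ 0 → 0 < θ₂ i)
    (heq : ∀ x : Fin d → ℝ, g₁ (∑ i, θ₁ i * x i) = g₂ (∑ i, θ₂ i * x i)) :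
    θ₁ = θ₂ ∧ g₁ = g₂ := by
  classical
  set a : ℝ := ∑ i, θ₁ i * θ₂ i with ha
  by_cases hdep : ∃ c : ℝ, ∀ i, θ₂ i = c * θ₁ i
  · obtain ⟨c, hc⟩ := hdep
    have hc2 : c ^ 2 = 1 := by
      have h1 : (∑ i, θ₂ i ^ 2) = c ^ 2 * ∑ i, θ₁ i ^ 2 := by
        rw [Finset.mul_sum]
        exact Finset.sum_congr rfl (fun i _ => by rw [hc i]; ring)
      rw [hθ₂norm, hθ₁norm, mul_one] at h1
      exact h1.symm
    have hθ1ne : ∃ i, θ₁ i ≠ 0 := by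
      by_contra h
      push_neg at h
      have h0 : (∑ i, θ₁ i ^ 2) = 0 :=
        Finset.sum_eq_zero (fun i _ => by rw [h i]; ring)
      rw [hθ₁norm] at h0; norm_num at h0
    have hc1 : c = 1 := by
      rcases mul_eq_zero.1 (show (c - 1) * (c + 1) = 0 by nlinarith) with h | h
      · linarith
      · exfalso
        have hcneg : c = -1 := by linarith
        obtain ⟨i, hi⟩ := hθ1ne
        set s : Finset (Fin d) := Finset.univ.filter (fun j => θ₁ j ≠ 0) with hs
        have hsne : s.Nonempty := ⟨i, by simp [hs, hi]⟩
        set i₀ := s.min' hsne with hi₀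
        have hi₀mem : i₀ ∈ s := s.min'_mem hsne
        have hi₀ne : θ₁ i₀ ≠ 0 := by simpa [hs] using hi₀mem
        have hzero : ∀ j < i₀, θ₁ j = 0 := by
          intro j hj
          by_contra hj0
          have : i₀ ≤ j := s.min'_le j (by simp [hs, hj0])
          exact absurd hj (not_lt.2 this)
        have hp1 : 0 < θ₁ i₀ := hθ₁pos i₀ hzero hi₀ne
        have hp2 : 0 < θ₂ i₀ := by
          refine hθ₂pos i₀ (fun j hj => ?_) ?_
          · rw [hc j, hzero j hj, mul_zero]
          · rw [hc i₀, hcneg]; simpa using hi₀ne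
        rw [hc i₀, hcneg] at hp2
        linarith
    have hθeq : θ₁ = θ₂ := funext fun i => by rw [hc i, hc1, one_mul]
    refine ⟨hθeq, funext fun u => ?_⟩
    have hmain := heq (fun i => u * θ₁ i)
    have hs1 : (∑ i, θ₁ i * (u * θ₁ i)) = u := by
      have : (∑ i, θ₁ i * (u * θ₁ i)) = u * ∑ i, θ₁ i ^ 2 := by
        rw [Finset.mul_sum]
        exact Finset.sum_congr rfl (fun i _ => by ring)
      rw [this, hθ₁norm, mul_one]
    rw [hs1, ← hθeq, hs1] at hmain
    exact hmain
  · exfalso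
    push_neg at hdep
    set w : Fin d → ℝ := fun i => θ₂ i - a * θ₁ i with hw
    set b : ℝ := ∑ i, w i ^ 2 with hb
    have hwne : ∃ i, w i ≠ 0 := by
      by_contra h
      push_neg at h
      obtain ⟨i, hi⟩ := hdep a
      have := h i
      simp only [hw] at this
      exact hi (by linarith)
    have hbpos : 0 < b := by
      obtain ⟨i, hi⟩ := hwne
      have h1 : ∀ j ∈ Finset.univ, (0:ℝ) ≤ w j ^ 2 := fun j _ => sq_nonneg _
      have h2 : (0:ℝ) < w i ^ 2 := by positivity
      exact Finset.sum_pos' h1 ⟨i, Finset.mem_univ i, h2⟩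
    have hS1w : ∑ i, θ₁ i * w i = 0 := by
      have h1 : (∑ i, θ₁ i * w i) = (∑ i, θ₁ i * θ₂ i) - a * ∑ i, θ₁ i ^ 2 := by
        rw [Finset.mul_sum, ← Finset.sum_sub_distrib]
        exact Finset.sum_congr rfl (fun i _ => by simp only [hw]; ring)
      rw [h1, hθ₁norm, ← ha, mul_one, sub_self]
    have hS2w : ∑ i, θ₂ i * w i = b := by
      have h1 : (∑ i, θ₂ i * w i) = (∑ i, w i ^ 2) + a * ∑ i, θ₁ i * w i := by
        rw [Finset.mul_sum, ← Finset.sum_add_distrib]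
        refine Finset.sum_congr rfl (fun i _ => ?_)
        have : θ₂ i = w i + a * θ₁ i := by simp only [hw]; ring
        rw [this]; ring
      rw [h1, hS1w, mul_zero, add_zero]
    have key : ∀ u t : ℝ, g₁ u = g₂ t := by
      intro u t
      set r : ℝ := (t - a * u) / b with hr
      have hmain := heq (fun i => u * θ₁ i + r * w i)
      have hx1 : (∑ i, θ₁ i * (u * θ₁ i + r * w i)) = u := by
        have h1 : (∑ i, θ₁ i * (u * θ₁ i + r * w i))
            = u * (∑ i, θ₁ i ^ 2) + r * ∑ i, θ₁ i * w i := by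
          rw [Finset.mul_sum, Finset.mul_sum, ← Finset.sum_add_distrib]
          exact Finset.sum_congr rfl (fun i _ => by ring)
        rw [h1, hθ₁norm, hS1w]; ring
      have hx2 : (∑ i, θ₂ i * (u * θ₁ i + r * w i)) = t := by
        have h1 : (∑ i, θ₂ i * (u * θ₁ i + r * w i))
            = u * (∑ i, θ₂ i * θ₁ i) + r * ∑ i, θ₂ i * w i := by
          rw [Finset.mul_sum, Finset.mul_sum, ← Finset.sum_add_distrib]
          exact Finset.sum_congr rfl (fun i _ => by ring)
        have h2 : (∑ i, θ₂ i * θ₁ i) = a := by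
          rw [ha]; exact Finset.sum_congr rfl (fun i _ => by ring)
        rw [h1, h2, hS2w, hr, div_mul_cancel₀ _ (ne_of_gt hbpos)]
        ring
      rw [hx1, hx2] at hmain
      exact hmain
    have hg2const : ∀ t, g₂ t = g₁ 0 := fun t => (key 0 t).symm
    have hg10 : g₁ 0 = 0 := by
      have h1 : Tendsto g₂ (cocompact ℝ) (nhds (g₁ 0)) := by
        have : g₂ = fun _ => g₁ 0 := funext hg2const
        rw [this]; exact tendsto_const_nhds
      exact tendsto_nhds_unique h1 h0₂
    obtain ⟨u, hu⟩ := hne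
    exact hu (((key u 0).trans (hg2const 0)).trans hg10)
end

section
/- Identifiability of the partially linear single-index model: let d ≥ 1, let g₁, g₂ : ℝ → ℝ be continuous functions with g₁(u) → 0 and g₂(u) → 0 as |u| → ∞, with g₁ not identically zero, let β₁, β₂ ∈ ℝ^d, and let θ₁, θ₂ ∈ ℝ^d be unit vectors whose first nonzero component is positive. If β₁^⊤ x + g₁(θ₁^⊤ x) = β₂^⊤ x + g₂(θ₂^⊤ x) for all x ∈ ℝ^d, then β₁ = β₂, θ₁ = θ₂ and g₁ = g₂. In particular, no orthogonality condition between β and θ is needed for identifiability. -/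
open Filter

private lemma tendsto_comp_mul_aux (g : ℝ → ℝ)
    (hg : Tendsto g (cocompact ℝ) (nhds 0)) (b : ℝ) :
    Tendsto (fun t : ℝ => g (t * b)) atTop (nhds (if b = 0 then g 0 else 0)) := by
  by_cases hb : b = 0
  · simp [hb]
  · simp only [hb, if_false]
    apply hg.comp
    rw [cocompact_eq_atBot_atTop]
    rcases lt_or_gt_of_ne hb with h | h
    · exact (tendsto_id.atTop_mul_const_of_neg h).mono_right le_sup_left
    · exact (tendsto_id.atTop_mul_const h).mono_right le_sup_right

/-- Identifiability of the partially linear single-index model: if `g₁, g₂` are continuous,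
vanish at infinity, `g₁` is not identically zero, `θ₁, θ₂` are unit vectors whose first
nonzero component is positive, `β₁, β₂ ∈ ℝ^d` are unrestricted, and
`β₁ᵀx + g₁(θ₁ᵀx) = β₂ᵀx + g₂(θ₂ᵀx)` for all `x ∈ ℝ^d`, then `β₁ = β₂`, `θ₁ = θ₂` and
`g₁ = g₂` (no orthogonality between `β` and `θ` is needed). -/
theorem partially_linear_single_index_identifiable (d : ℕ) (hd : 1 ≤ d)
    (g₁ g₂ : ℝ → ℝ) (hc₁ : Continuous g₁) (hc₂ : Continuous g₂)
    (h0₁ : Tendsto g₁ (cocompact ℝ) (nhds 0))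
    (h0₂ : Tendsto g₂ (cocompact ℝ) (nhds 0))
    (hne : ∃ u : ℝ, g₁ u ≠ 0)
    (β₁ β₂ : Fin d → ℝ)
    (θ₁ θ₂ : Fin d → ℝ)
    (hθ₁norm : ∑ i, θ₁ i ^ 2 = 1) (hθ₂norm : ∑ i, θ₂ i ^ 2 = 1)
    (hθ₁pos : ∀ i : Fin d, (∀ j < i, θ₁ j = 0) → θ₁ i ≠ 0 → 0 < θ₁ i)
    (hθ₂pos : ∀ i : Fin d, (∀ j < i, θ₂ j = 0) → θ₂ i ≠ 0 → 0 < θ₂ i)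
    (heq : ∀ x : Fin d → ℝ,
      (∑ i, β₁ i * x i) + g₁ (∑ i, θ₁ i * x i) =
        (∑ i, β₂ i * x i) + g₂ (∑ i, θ₂ i * x i)) :
    β₁ = β₂ ∧ θ₁ = θ₂ ∧ g₁ = g₂ := by
  -- Step 1: the linear parts coincide on every x.
  have hlin : ∀ x : Fin d → ℝ, (∑ i, β₁ i * x i) = (∑ i, β₂ i * x i) := by
    intro x
    set a : ℝ := (∑ i, β₁ i * x i) - (∑ i, β₂ i * x i) with ha
    set b₁ : ℝ := ∑ i, θ₁ i * x i
    set b₂ : ℝ := ∑ i, θ₂ i * x i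
    have key : ∀ t : ℝ, t * a = g₂ (t * b₂) - g₁ (t * b₁) := by
      intro t
      have h := heq (fun i => t * x i)
      have e1 : ∀ (c : Fin d → ℝ), (∑ i, c i * (t * x i)) = t * ∑ i, c i * x i := by
        intro c
        rw [Finset.mul_sum]
        exact Finset.sum_congr rfl fun i _ => by ring
      rw [e1 β₁, e1 β₂, e1 θ₁, e1 θ₂] at h
      simp only [ha]
      linarith
    have hT : Tendsto (fun t : ℝ => t * a) atTop
        (nhds ((if b₂ = 0 then g₂ 0 else 0) - (if b₁ = 0 then g₁ 0 else 0))) := by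
      have := (tendsto_comp_mul_aux g₂ h0₂ b₂).sub (tendsto_comp_mul_aux g₁ h0₁ b₁)
      refine this.congr fun t => (key t).symm
    have haz : a = 0 := by
      by_contra hA
      rcases lt_or_gt_of_ne hA with h | h
      · exact not_tendsto_nhds_of_tendsto_atBot (tendsto_id.atTop_mul_const_of_neg h) _ hT
      · exact not_tendsto_nhds_of_tendsto_atTop (tendsto_id.atTop_mul_const h) _ hT
    linarith [haz]
  have hβ : β₁ = β₂ := by
    funext j
    have := hlin (Pi.single j 1)
    simpa [Pi.single_apply, Finset.sum_ite_eq', mul_comm] using this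
  -- Step 2: the link parts coincide.
  have key : ∀ x : Fin d → ℝ, g₁ (∑ i, θ₁ i * x i) = g₂ (∑ i, θ₂ i * x i) := by
    intro x
    have h := heq x
    have := hlin x
    linarith
  set c : ℝ := ∑ i, θ₁ i * θ₂ i with hc
  have hC1 : ∀ u : ℝ, g₁ u = g₂ (c * u) := by
    intro u
    have h := key (fun i => u * θ₁ i)
    have e1 : (∑ i, θ₁ i * (u * θ₁ i)) = u := by
      have : (∑ i, θ₁ i * (u * θ₁ i)) = u * ∑ i, θ₁ i ^ 2 := by
        rw [Finset.mul_sum]; exact Finset.sum_congr rfl fun i _ => by ring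
      rw [this, hθ₁norm, mul_one]
    have e2 : (∑ i, θ₂ i * (u * θ₁ i)) = c * u := by
      rw [hc, Finset.sum_mul]; exact Finset.sum_congr rfl fun i _ => by ring
    rw [e1, e2] at h
    exact h
  have hC2 : ∀ u : ℝ, g₂ u = g₁ (c * u) := by
    intro u
    have h := key (fun i => u * θ₂ i)
    have e1 : (∑ i, θ₂ i * (u * θ₂ i)) = u := by
      have : (∑ i, θ₂ i * (u * θ₂ i)) = u * ∑ i, θ₂ i ^ 2 := by
        rw [Finset.mul_sum]; exact Finset.sum_congr rfl fun i _ => by ring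
      rw [this, hθ₂norm, mul_one]
    have e2 : (∑ i, θ₁ i * (u * θ₂ i)) = c * u := by
      rw [hc, Finset.sum_mul]; exact Finset.sum_congr rfl fun i _ => by ring
    rw [e1, e2] at h
    exact h.symm
  -- bounds on c
  have hsub : ∑ i, (θ₁ i - θ₂ i) ^ 2 = 2 - 2 * c := by
    have e : ∀ i : Fin d, (θ₁ i - θ₂ i) ^ 2 = θ₁ i ^ 2 + θ₂ i ^ 2 - 2 * (θ₁ i * θ₂ i) := by
      intro i; ring
    rw [Finset.sum_congr rfl fun i _ => e i, Finset.sum_sub_distrib, Finset.sum_add_distrib,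
      ← Finset.mul_sum, hθ₁norm, hθ₂norm, ← hc]
    ring
  have hadd : ∑ i, (θ₁ i + θ₂ i) ^ 2 = 2 + 2 * c := by
    have e : ∀ i : Fin d, (θ₁ i + θ₂ i) ^ 2 = θ₁ i ^ 2 + θ₂ i ^ 2 + 2 * (θ₁ i * θ₂ i) := by
      intro i; ring
    rw [Finset.sum_congr rfl fun i _ => e i, Finset.sum_add_distrib, Finset.sum_add_distrib,
      ← Finset.mul_sum, hθ₁norm, hθ₂norm, ← hc]
    ring
  have hcle : c ≤ 1 := by
    have h1 : (0:ℝ) ≤ ∑ i, (θ₁ i - θ₂ i) ^ 2 :=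
      Finset.sum_nonneg fun i _ => sq_nonneg _
    linarith [hsub ▸ h1]
  have hcge : -1 ≤ c := by
    have h1 : (0:ℝ) ≤ ∑ i, (θ₁ i + θ₂ i) ^ 2 :=
      Finset.sum_nonneg fun i _ => sq_nonneg _
    linarith [hadd ▸ h1]
  -- rule out |c| < 1: then g₁ would be identically 0
  have habs : c = 1 ∨ c = -1 := by
    by_contra hC
    push_neg at hC
    obtain ⟨hC1', hC2'⟩ := hC
    have hlt : c < 1 := lt_of_le_of_ne hcle hC1'
    have hgt : -1 < c := lt_of_le_of_ne hcge (Ne.symm hC2')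
    set r : ℝ := c ^ 2 with hr
    have hr0 : 0 ≤ r := sq_nonneg c
    have hr1 : r < 1 := by nlinarith
    have hstep : ∀ u : ℝ, g₁ u = g₁ (r * u) := by
      intro u
      rw [hC1 u, hC2 (c * u)]
      congr 1; rw [hr]; ring
    have hiter : ∀ (n : ℕ) (u : ℝ), g₁ u = g₁ (r ^ n * u) := by
      intro n
      induction n with
      | zero => intro u; simp
      | succ n ih =>
        intro u
        rw [ih u, hstep (r ^ n * u)]
        ring_nf
    have hconst : ∀ u : ℝ, g₁ u = g₁ 0 := by
      intro u
      have hT : Tendsto (fun n : ℕ => r ^ n * u) atTop (nhds 0) := by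
        simpa using (tendsto_pow_atTop_nhds_zero_of_lt_one hr0 hr1).mul_const u
      have hT2 : Tendsto (fun n : ℕ => g₁ (r ^ n * u)) atTop (nhds (g₁ 0)) :=
        ((hc₁.tendsto 0).comp hT)
      have hT3 : Tendsto (fun n : ℕ => g₁ (r ^ n * u)) atTop (nhds (g₁ u)) := by
        simp only [fun n => (hiter n u).symm]
        exact tendsto_const_nhds
      exact tendsto_nhds_unique hT3 hT2
    have hzero : g₁ 0 = 0 := by
      have hgconst : g₁ = fun _ => g₁ 0 := funext hconst
      rw [hgconst] at h0₁
      exact tendsto_nhds_unique tendsto_const_nhds h0₁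
    obtain ⟨u, hu⟩ := hne
    exact hu (by rw [hconst u, hzero])
  -- rule out c = -1 using the sign normalization
  have hθne : ∃ i, θ₁ i ≠ 0 := by
    by_contra hz
    push_neg at hz
    have : (∑ i, θ₁ i ^ 2) = 0 := Finset.sum_eq_zero fun i _ => by rw [hz i]; ring
    rw [hθ₁norm] at this
    norm_num at this
  have hθeq : θ₁ = θ₂ := by
    rcases habs with h1 | h1
    · funext i
      have hsz : ∑ i, (θ₁ i - θ₂ i) ^ 2 = 0 := by rw [hsub, h1]; ring
      have := (Finset.sum_eq_zero_iff_of_nonneg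
        (fun i _ => sq_nonneg (θ₁ i - θ₂ i))).mp hsz i (Finset.mem_univ i)
      have := pow_eq_zero_iff (n := 2) (by norm_num) |>.mp this
      linarith
    · exfalso
      have hneg : ∀ i, θ₂ i = -θ₁ i := by
        intro i
        have hsz : ∑ i, (θ₁ i + θ₂ i) ^ 2 = 0 := by rw [hadd, h1]; ring
        have := (Finset.sum_eq_zero_iff_of_nonneg
          (fun i _ => sq_nonneg (θ₁ i + θ₂ i))).mp hsz i (Finset.mem_univ i)
        have := pow_eq_zero_iff (n := 2) (by norm_num) |>.mp this
        linarith
      -- take the least index with θ₁ i ≠ 0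
      set s : Finset (Fin d) := Finset.univ.filter (fun i => θ₁ i ≠ 0) with hs
      have hsne : s.Nonempty := by
        obtain ⟨i, hi⟩ := hθne
        exact ⟨i, by simp [hs, hi]⟩
      set i₀ : Fin d := s.min' hsne with hi₀
      have hi₀mem : i₀ ∈ s := s.min'_mem hsne
      have hi₀ne : θ₁ i₀ ≠ 0 := by
        have := hi₀mem
        simp [hs] at this
        exact this
      have hbefore : ∀ j < i₀, θ₁ j = 0 := by
        intro j hj
        by_contra hjz
        have hjs : j ∈ s := by simp [hs, hjz]
        exact absurd (s.min'_le j hjs) (not_le.mpr hj)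
      have hpos1 : 0 < θ₁ i₀ := hθ₁pos i₀ hbefore hi₀ne
      have hpos2 : 0 < θ₂ i₀ := by
        apply hθ₂pos i₀
        · intro j hj; rw [hneg j, hbefore j hj]; ring
        · rw [hneg i₀]; exact neg_ne_zero.mpr hi₀ne
      rw [hneg i₀] at hpos2
      linarith
  refine ⟨hβ, hθeq, ?_⟩
  funext u
  have h1 : c = 1 := by
    rcases habs with h | h
    · exact h
    · exfalso
      have : θ₁ = θ₂ := hθeq
      have hcc : c = ∑ i, θ₁ i ^ 2 := by
        rw [hc, hθeq]
        exact Finset.sum_congr rfl fun i _ => (sq (θ₂ i)).symm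
      rw [hθ₁norm] at hcc
      rw [h] at hcc
      norm_num at hcc
  rw [hC1 u, h1, one_mul]
end
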